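/- Let C2 be a linear code (GF(4)-linear subspace) in GF(4)^N and let p0 ∈ [1/4, 1]. Then Σ_{z ∈ GF(4)^N} F_{z−C2}(p0) · log2( F_{z−C2}(p0) / F_{C2}(p0) ) ≤ 0. -/

import Mathlib

/-!
GF(4) is modeled as `GaloisField 2 2`, vectors in GF(4)^N as `Fin N → GaloisField 2 2`,
Hamming weight as `hammingNorm`. `Fw C p0` is the function
`F_C(p0) = (1/|C|) · Σ_{v ∈ C} p0^(N−w(v)) · ((1−p0)/3)^(w(v))`,
`translateSet z C` is the translate `z − C`, and `codeFinset` turns a linear code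
(a `Submodule`) into the corresponding `Finset`.
-/

open scoped Classical

noncomputable instance : Fintype (GaloisField 2 2) := Fintype.ofFinite _

noncomputable def Fw {N : ℕ} (C : Finset (Fin N → GaloisField 2 2)) (p0 : ℝ) : ℝ :=
  ((C.card : ℝ))⁻¹ *
    ∑ v ∈ C, p0 ^ (N - hammingNorm v) * ((1 - p0) / 3) ^ hammingNorm v

noncomputable def translateSet {N : ℕ} (z : Fin N → GaloisField 2 2)
    (C : Finset (Fin N → GaloisField 2 2)) : Finset (Fin N → GaloisField 2 2) :=
  C.image fun c => z - c

noncomputable def codeFinset {N : ℕ}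
    (C : Submodule (GaloisField 2 2) (Fin N → GaloisField 2 2)) :
    Finset (Fin N → GaloisField 2 2) :=
  Finset.univ.filter (· ∈ C)

namespace FTAux

abbrev K := GaloisField 2 2

lemma card_K : Fintype.card K = 4 := by
  have h := GaloisField.card 2 2 (by norm_num)
  rw [Nat.card_eq_fintype_card] at h
  simpa using h

lemma pow4 (x : K) : x ^ 4 = x := by
  have := FiniteField.pow_card x
  rwa [card_K] at this

lemma tr_mem (x : K) : x + x ^ 2 = 0 ∨ x + x ^ 2 = 1 := by
  have h4 : x ^ 4 = x := pow4 x
  have hsq : (x + x ^ 2) ^ 2 = x + x ^ 2 := by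
    have : (x + x ^ 2) ^ 2 = x ^ 2 + x ^ 4 := by
      rw [CharTwo.add_sq]; ring
    rw [this, h4]; ring
  have hz : (x + x ^ 2) * ((x + x ^ 2) - 1) = 0 := by linear_combination hsq
  rcases mul_eq_zero.mp hz with h | h
  · exact Or.inl h
  · exact Or.inr (by linear_combination h)

noncomputable def χ (x : K) : ℝ := if x + x ^ 2 = 0 then 1 else -1

lemma chi_zero : χ 0 = 1 := by simp [χ]

lemma chi_cases (x : K) : χ x = 1 ∨ χ x = -1 := by unfold χ; split <;> simp

lemma chi_le_one (x : K) : χ x ≤ 1 := by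
  rcases chi_cases x with h | h <;> rw [h] <;> norm_num

lemma chi_add (a b : K) : χ (a + b) = χ a * χ b := by
  have htr : (a + b) + (a + b) ^ 2 = (a + a ^ 2) + (b + b ^ 2) := by
    rw [CharTwo.add_sq]; ring
  unfold χ
  rcases tr_mem a with ha | ha <;> rcases tr_mem b with hb | hb <;>
    simp [htr, ha, hb, CharTwo.add_self_eq_zero]

lemma chi_sub (a b : K) : χ (a - b) = χ a * χ b := by
  rw [CharTwo.sub_eq_add, chi_add]

lemma tr_zero_iff (x : K) : x + x ^ 2 = 0 ↔ x = 0 ∨ x = 1 := by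
  constructor
  · intro h
    have : x * (1 + x) = 0 := by linear_combination h
    rcases mul_eq_zero.mp this with h1 | h2
    · exact Or.inl h1
    · right
      have hx : x = -1 := eq_neg_of_add_eq_zero_right h2
      rw [hx, CharTwo.neg_eq]
  · rintro (rfl | rfl)
    · simp
    · simpa using CharTwo.add_self_eq_zero (1 : K)

lemma chi_sum_zero : ∑ x : K, χ x = 0 := by
  have h2 : (Finset.univ.filter fun x : K => x + x ^ 2 = 0) = {0, 1} := by
    ext x; simp [tr_zero_iff x]
  have hcard : (Finset.univ.filter fun x : K => x + x ^ 2 = 0).card = 2 := by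
    rw [h2]; rw [Finset.card_insert_of_notMem (by simp), Finset.card_singleton]
  have hcard' : (Finset.univ.filter fun x : K => ¬(x + x ^ 2 = 0)).card = 2 := by
    have := Finset.card_filter_add_card_filter_not
      (s := (Finset.univ : Finset K)) (p := fun x : K => x + x ^ 2 = 0)
    rw [Finset.card_univ, card_K, hcard] at this
    omega
  unfold χ
  rw [Finset.sum_ite, Finset.sum_const, Finset.sum_const, hcard, hcard']
  norm_num

lemma chi_mul_sum_zero (x : K) (hx : x ≠ 0) : ∑ y : K, χ (x * y) = 0 := by
  rw [← chi_sum_zero]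
  exact Fintype.sum_equiv (Equiv.mulLeft₀ x hx) (fun y => χ (x * y)) χ (fun y => rfl)

noncomputable def ghat (t : ℝ) (y : K) : ℝ := if y = 0 then (1 + 3 * t) / 4 else (1 - t) / 4

lemma ghat_nonneg {t : ℝ} (ht0 : 0 ≤ t) (ht1 : t ≤ 1) (y : K) : 0 ≤ ghat t y := by
  unfold ghat; split <;> linarith

lemma g_expand (t : ℝ) (x : K) :
    (if x = 0 then (1 : ℝ) else t) = ∑ y : K, ghat t y * χ (x * y) := by
  by_cases hx : x = 0
  · subst hx
    have h1 : ∀ y : K, ghat t y * χ ((0 : K) * y)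
        = (1 - t) / 4 + (if y = 0 then (1 + 3 * t) / 4 - (1 - t) / 4 else 0) := by
      intro y
      rw [zero_mul, chi_zero, mul_one]
      unfold ghat; split <;> ring
    rw [Finset.sum_congr rfl fun y _ => h1 y, Finset.sum_add_distrib, Finset.sum_const,
      Finset.sum_ite_eq' Finset.univ (0 : K), Finset.card_univ, card_K]
    simp; ring
  · have h1 : ∀ y : K, ghat t y * χ (x * y)
        = (1 - t) / 4 * χ (x * y) + (if y = 0 then t else 0) := by
      intro y
      unfold ghat
      by_cases hy : y = 0
      · subst hy; rw [mul_zero, chi_zero]; simp; ring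
      · simp [hy]
    rw [Finset.sum_congr rfl fun y _ => h1 y, Finset.sum_add_distrib, ← Finset.mul_sum,
      chi_mul_sum_zero x hx, Finset.sum_ite_eq' Finset.univ (0 : K)]
    simp [hx]

lemma chi_finsum {ι : Type*} (s : Finset ι) (f : ι → K) :
    χ (∑ i ∈ s, f i) = ∏ i ∈ s, χ (f i) := by
  induction s using Finset.cons_induction with
  | empty => simp [chi_zero]
  | cons a s ha ih => rw [Finset.sum_cons, Finset.prod_cons, chi_add, ih]


variable {N : ℕ}

noncomputable def Ghat (t : ℝ) (y : Fin N → K) : ℝ := ∏ i, ghat t (y i)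

lemma Ghat_nonneg {t : ℝ} (ht0 : 0 ≤ t) (ht1 : t ≤ 1) (y : Fin N → K) : 0 ≤ Ghat t y :=
  Finset.prod_nonneg fun i _ => ghat_nonneg ht0 ht1 (y i)

noncomputable def φ (y v : Fin N → K) : K := ∑ i, v i * y i

lemma pow_w_expand (t : ℝ) (v : Fin N → K) :
    t ^ hammingNorm v = ∑ y : Fin N → K, Ghat t y * χ (φ y v) := by
  have h1 : t ^ hammingNorm v = ∏ i, (if v i = 0 then (1 : ℝ) else t) := by
    rw [hammingNorm, ← Finset.prod_const]
    rw [Finset.prod_filter]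
    exact Finset.prod_congr rfl fun i _ => by by_cases h : v i = 0 <;> simp [h]
  rw [h1, Finset.prod_congr rfl fun i _ => g_expand t (v i), Fintype.prod_sum]
  exact Finset.sum_congr rfl fun y _ => by
    rw [Finset.prod_mul_distrib, ← chi_finsum]
    rfl

lemma phi_sub (y z c : Fin N → K) : φ y (z - c) = φ y z - φ y c := by
  unfold φ
  rw [← Finset.sum_sub_distrib]
  exact Finset.sum_congr rfl fun i _ => by simp [sub_mul]

lemma phi_add (y z c : Fin N → K) : φ y (z + c) = φ y z + φ y c := by
  unfold φ
  rw [← Finset.sum_add_distrib]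
  exact Finset.sum_congr rfl fun i _ => by simp [add_mul]

lemma T_nonneg (C : Submodule K (Fin N → K)) (y : Fin N → K) :
    0 ≤ ∑ c ∈ codeFinset C, χ (φ y c) := by
  by_cases h : ∀ c ∈ codeFinset C, χ (φ y c) = 1
  · rw [Finset.sum_congr rfl h, Finset.sum_const]
    positivity
  · push_neg at h
    obtain ⟨c0, hc0, hne⟩ := h
    have hc0' : χ (φ y c0) = -1 := (chi_cases (φ y c0)).resolve_left hne
    have hc0m : c0 ∈ C := by simpa [codeFinset] using hc0
    have hinv : ∀ c : Fin N → K, c + c0 + c0 = c := by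
      intro c
      funext i
      simp [add_assoc, CharTwo.add_self_eq_zero]
    have hbij : ∑ c ∈ codeFinset C, χ (φ y c) = ∑ c ∈ codeFinset C, χ (φ y (c + c0)) := by
      apply Finset.sum_nbij' (i := fun c => c + c0) (j := fun c => c + c0)
      · intro a ha
        simp only [codeFinset, Finset.mem_filter, Finset.mem_univ, true_and] at ha ⊢
        exact C.add_mem ha hc0m
      · intro a ha
        simp only [codeFinset, Finset.mem_filter, Finset.mem_univ, true_and] at ha ⊢
        exact C.add_mem ha hc0m
      · intro a _; exact hinv a
      · intro a _; exact hinv a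
      · intro a _
        rw [hinv a]
    have hneg : ∑ c ∈ codeFinset C, χ (φ y (c + c0)) = -∑ c ∈ codeFinset C, χ (φ y c) := by
      rw [Finset.sum_congr rfl fun c _ => by rw [phi_add, chi_add, hc0', mul_neg_one]]
      exact Finset.sum_neg_distrib (s := codeFinset C) (f := fun c => χ (φ y c))
    rw [hbij, hneg] at *
    linarith [le_of_eq hbij]

lemma key (C : Submodule K (Fin N → K)) {t : ℝ} (ht0 : 0 ≤ t) (ht1 : t ≤ 1)
    (z : Fin N → K) :
    ∑ c ∈ codeFinset C, t ^ hammingNorm (z - c) ≤ ∑ c ∈ codeFinset C, t ^ hammingNorm c := by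
  have hL : ∑ c ∈ codeFinset C, t ^ hammingNorm (z - c)
      = ∑ y : Fin N → K, Ghat t y * (χ (φ y z) * ∑ c ∈ codeFinset C, χ (φ y c)) := by
    rw [Finset.sum_congr rfl fun c _ => pow_w_expand t (z - c), Finset.sum_comm]
    apply Finset.sum_congr rfl; intro y _
    rw [Finset.mul_sum, Finset.mul_sum]
    apply Finset.sum_congr rfl; intro c _
    rw [phi_sub, chi_sub]
  have hR : ∑ c ∈ codeFinset C, t ^ hammingNorm c
      = ∑ y : Fin N → K, Ghat t y * ∑ c ∈ codeFinset C, χ (φ y c) := by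
    rw [Finset.sum_congr rfl fun c _ => pow_w_expand t c, Finset.sum_comm]
    exact Finset.sum_congr rfl fun y _ => (Finset.mul_sum _ _ _).symm
  rw [hL, hR]
  apply Finset.sum_le_sum
  intro y _
  have hG := Ghat_nonneg ht0 ht1 y
  have hT := T_nonneg C y
  have hχ := chi_le_one (φ y z)
  nlinarith [mul_le_mul_of_nonneg_right hχ hT]

end FTAux

/-- Lemma 3: the first relative-entropy-like term in the secrecy leakage is nonpositive. -/
theorem first_term_nonpos {N : ℕ} (hN : 1 ≤ N)
    (C2 : Submodule (GaloisField 2 2) (Fin N → GaloisField 2 2))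
    (p0 : ℝ) (hp0 : p0 ∈ Set.Icc (1 / 4 : ℝ) 1) :
    (∑ z : Fin N → GaloisField 2 2,
        Fw (translateSet z (codeFinset C2)) p0 *
          Real.logb 2 (Fw (translateSet z (codeFinset C2)) p0 / Fw (codeFinset C2) p0)) ≤ 0 := by
  obtain ⟨hp14, hp1⟩ := hp0
  have hp00 : (0 : ℝ) < p0 := lt_of_lt_of_le (by norm_num) hp14
  set q : ℝ := (1 - p0) / 3 with hq
  have hq0 : 0 ≤ q := by rw [hq]; linarith
  set t : ℝ := q / p0 with ht
  have ht0 : 0 ≤ t := div_nonneg hq0 hp00.le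
  have ht1 : t ≤ 1 := by
    rw [ht, div_le_one hp00, hq]; linarith
  have hpow : ∀ v : Fin N → GaloisField 2 2,
      p0 ^ (N - hammingNorm v) * q ^ hammingNorm v = p0 ^ N * t ^ hammingNorm v := by
    intro v
    have hw : hammingNorm v ≤ N := by
      have := hammingNorm_le_card_fintype (x := v)
      simpa using this
    have hqt : q = p0 * t := by rw [ht]; field_simp
    rw [hqt, mul_pow, ← mul_assoc, ← pow_add, Nat.sub_add_cancel hw]
  have hFwC : Fw (codeFinset C2) p0
      = ((codeFinset C2).card : ℝ)⁻¹ * (p0 ^ N * ∑ c ∈ codeFinset C2, t ^ hammingNorm c) := by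
    unfold Fw
    rw [Finset.sum_congr rfl fun v _ => hpow v, ← Finset.mul_sum]
  have hFwT : ∀ z : Fin N → GaloisField 2 2, Fw (translateSet z (codeFinset C2)) p0
      = ((codeFinset C2).card : ℝ)⁻¹ *
          (p0 ^ N * ∑ c ∈ codeFinset C2, t ^ hammingNorm (z - c)) := by
    intro z
    have hinj : Function.Injective (fun c : Fin N → GaloisField 2 2 => z - c) := by
      intro a b h
      simpa using sub_right_injective h
    unfold Fw translateSet
    rw [Finset.card_image_of_injective _ hinj, Finset.sum_image (fun a _ b _ h => hinj h),
        Finset.sum_congr rfl fun c _ => hpow (z - c), ← Finset.mul_sum]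
  have h0mem : (0 : Fin N → GaloisField 2 2) ∈ codeFinset C2 := by
    simp [codeFinset]
  have hcard : (0 : ℝ) < ((codeFinset C2).card : ℝ) := by
    exact_mod_cast Finset.card_pos.mpr ⟨0, h0mem⟩
  have hbpos : 0 < Fw (codeFinset C2) p0 := by
    rw [hFwC]
    apply mul_pos (inv_pos.mpr hcard)
    apply mul_pos (pow_pos hp00 N)
    apply Finset.sum_pos'
    · intro c _; positivity
    · exact ⟨0, h0mem, by simp⟩
  have hle : ∀ z, Fw (translateSet z (codeFinset C2)) p0 ≤ Fw (codeFinset C2) p0 := by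
    intro z
    rw [hFwT z, hFwC]
    refine mul_le_mul_of_nonneg_left ?_ (inv_nonneg.mpr hcard.le)
    exact mul_le_mul_of_nonneg_left (FTAux.key C2 ht0 ht1 z) (pow_pos hp00 N).le
  have hge : ∀ z, 0 ≤ Fw (translateSet z (codeFinset C2)) p0 := by
    intro z
    rw [hFwT z]
    have : 0 ≤ ∑ c ∈ codeFinset C2, t ^ hammingNorm (z - c) :=
      Finset.sum_nonneg fun c _ => pow_nonneg ht0 _
    positivity
  apply Finset.sum_nonpos
  intro z _
  have hdiv0 : 0 ≤ Fw (translateSet z (codeFinset C2)) p0 / Fw (codeFinset C2) p0 :=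
    div_nonneg (hge z) hbpos.le
  have hdiv1 : Fw (translateSet z (codeFinset C2)) p0 / Fw (codeFinset C2) p0 ≤ 1 :=
    (div_le_one hbpos).mpr (hle z)
  have hlog := Real.logb_nonpos (by norm_num : (1:ℝ) < 2) hdiv0 hdiv1
  nlinarith [hge z, hlog]
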